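/- If the multiplicative group of a division ring D is a torsion group, then D is commutative (a field). -/

import Mathlib

open Polynomial in
lemma prod_X_sub_C_finite_field (K : Type*) [Field K] [Fintype K] :
    ∏ c : K, (X - C c) = X ^ (Fintype.card K) - X := by
  classical
  have h1 : (1:ℕ) < Fintype.card K := Fintype.one_lt_card
  have hm : (X ^ (Fintype.card K) - X : K[X]).Monic := by
    have hd : ((X : K[X]).degree < ((Fintype.card K : ℕ) : WithBot ℕ)) :=
      Polynomial.degree_X_le.trans_lt (by exact_mod_cast h1)
    exact Polynomial.monic_X_pow_sub hd
  have hr := FiniteField.roots_X_pow_card_sub_X K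
  have hcard : Multiset.card (X ^ (Fintype.card K) - X : K[X]).roots
      = (X ^ (Fintype.card K) - X : K[X]).natDegree := by
    rw [hr, FiniteField.X_pow_card_sub_X_natDegree_eq K h1]
    simp
  have := Polynomial.prod_multiset_X_sub_C_of_monic_of_roots_card_eq hm hcard
  rw [hr] at this
  rw [← this]
  rfl

-- finite subring from finite multiplicatively-closed set in char p
lemma exists_finite_subring (D : Type*) [DivisionRing D] (p : ℕ) [hp : Fact p.Prime]
    [CharP D p] (S : Set D) (hfin : S.Finite) (h1 : (1:D) ∈ S)
    (hmul : ∀ x ∈ S, ∀ y ∈ S, x * y ∈ S) :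
    ∃ R : Subring D, S ⊆ R ∧ (R : Set D).Finite := by
  have hA : ∀ x ∈ AddSubgroup.closure S, ∀ y ∈ AddSubgroup.closure S,
      x * y ∈ AddSubgroup.closure S := by
    intro x hx y hy
    induction hx using AddSubgroup.closure_induction with
    | mem a ha =>
      induction hy using AddSubgroup.closure_induction with
      | mem b hb => exact AddSubgroup.subset_closure (hmul a ha b hb)
      | zero => simpa using AddSubgroup.zero_mem _
      | add b c _ _ hb hc => rw [mul_add]; exact AddSubgroup.add_mem _ hb hc
      | neg b _ hb => rw [mul_neg]; exact AddSubgroup.neg_mem _ hb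
    | zero => simpa using AddSubgroup.zero_mem _
    | add a b _ _ ha hb => rw [add_mul]; exact AddSubgroup.add_mem _ ha hb
    | neg a _ ha => rw [neg_mul]; exact AddSubgroup.neg_mem _ ha
  refine ⟨{ AddSubgroup.closure S with
      one_mem' := AddSubgroup.subset_closure h1
      mul_mem' := fun hx hy => hA _ hx _ hy }, AddSubgroup.subset_closure, ?_⟩
  haveI : Finite S := hfin
  haveI : AddGroup.FG (AddSubgroup.closure S) := AddGroup.closure_finite_fg S
  have htor : AddMonoid.IsTorsion (AddSubgroup.closure S) := by
    intro x
    refine isOfFinAddOrder_iff_nsmul_eq_zero.2 ⟨p, hp.out.pos, ?_⟩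
    ext
    push_cast
    show (p : ℕ) • (x : D) = 0
    simp [nsmul_eq_mul, CharP.cast_eq_zero D p]
  have : Finite (AddSubgroup.closure S) := AddCommGroup.finite_of_fg_torsion _ htor
  exact Set.toFinite _

lemma tor_prime_char (D : Type*) [DivisionRing D]
    (h : ∀ x : Dˣ, IsOfFinOrder x) : ∃ p : ℕ, p.Prime ∧ CharP D p := by
  obtain ⟨p, hp⟩ : ∃ p, CharP D p := ⟨ringChar D, inferInstance⟩
  rcases CharP.char_is_prime_or_zero D p with hpp | rfl
  · exact ⟨p, hpp, hp⟩
  · exfalso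
    haveI : CharZero D := CharP.charP_to_charZero D
    obtain ⟨n, hn, h2⟩ := isOfFinOrder_iff_pow_eq_one.1 (h (Units.mk0 (2:D) two_ne_zero))
    have : ((2:D))^n = 1 := by
      have := congrArg (Units.val) h2
      simpa using this
    have : ((2^n : ℕ) : D) = ((1 : ℕ) : D) := by push_cast; simpa using this
    have := Nat.cast_injective (R := D) this
    have h2n : 2^n ≥ 2^1 := Nat.pow_le_pow_right (by norm_num) hn
    omega

set_option maxHeartbeats 1000000 in
set_option synthInstance.maxHeartbeats 400000 in
/-- If the multiplicative group of a division ring is torsion, then the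
division ring is commutative. -/
theorem comm_of_torsion_units (D : Type*) [DivisionRing D]
    (h : ∀ x : Dˣ, IsOfFinOrder x) :
    ∀ a b : D, a * b = b * a := by
  classical
  have tor : ∀ x : D, x ≠ 0 → ∃ n, 0 < n ∧ x ^ n = 1 := by
    intro x hx
    obtain ⟨n, hn, hxn⟩ := isOfFinOrder_iff_pow_eq_one.1 (h (Units.mk0 x hx))
    exact ⟨n, hn, by have := congrArg (Units.val) hxn; simpa using this⟩
  obtain ⟨p, hp, hcp⟩ := tor_prime_char D h
  haveI : Fact p.Prime := ⟨hp⟩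
  intro a b
  by_contra hab
  have ha0 : a ≠ 0 := by rintro rfl; simp at hab
  obtain ⟨n, hn, han⟩ := tor a ha0
  -- power-mod lemma
  have powmod : ∀ (x : D) (k : ℕ), 0 < k → x ^ k = 1 → ∀ i, x ^ i = x ^ (i % k) := by
    intro x k hk hxk i
    conv_lhs => rw [← Nat.div_add_mod i k]
    rw [pow_add, pow_mul, hxk, one_pow, one_mul]
  -- finite subring containing powers of a
  set Spow : Set D := Set.range (fun i : Fin n => a ^ (i : ℕ)) with hSpow
  have hSpowfin : Spow.Finite := Set.finite_range _
  have h1S : (1:D) ∈ Spow := ⟨⟨0, hn⟩, by simp⟩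
  have hmulS : ∀ x ∈ Spow, ∀ y ∈ Spow, x * y ∈ Spow := by
    rintro _ ⟨i, rfl⟩ _ ⟨j, rfl⟩
    refine ⟨⟨((i:ℕ) + j) % n, Nat.mod_lt _ hn⟩, ?_⟩
    simp only
    rw [← powmod a n hn han, pow_add]
  obtain ⟨R, hSR, hRfin⟩ := exists_finite_subring D p Spow hSpowfin h1S hmulS
  set K : Subring D := Subring.closure {a} with hKdef
  have haK : a ∈ K := Subring.subset_closure rfl
  have haR : a ∈ R := hSR ⟨⟨1 % n, Nat.mod_lt _ hn⟩, by
    show a ^ (1 % n) = a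
    rw [← powmod a n hn han 1, pow_one]⟩
  have hKR : K ≤ R := Subring.closure_le.2 (Set.singleton_subset_iff.2 haR)
  have hKfin : (K : Set D).Finite := hRfin.subset hKR
  haveI : Finite ↥K := hKfin
  haveI : Fintype ↥K := Fintype.ofFinite ↥K
  have hKfield : IsField ↥K := Finite.isDomain_to_isField ↥K
  letI : Field ↥K := hKfield.toField
  -- elements of K commute with a
  have hcommK : ∀ c ∈ K, c * a = a * c := by
    intro c hc
    have := hKfield.mul_comm ⟨c, hc⟩ ⟨a, haK⟩
    exact congrArg Subtype.val this
  obtain ⟨m, hpp', hcard⟩ := FiniteField.card ↥K p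
  have haq : a ^ Fintype.card ↥K = a := by
    have := FiniteField.pow_card (⟨a, haK⟩ : ↥K)
    have := congrArg Subtype.val this
    simpa using this
  -- the K-module structure on D and the operators
  letI : Module ↥K D := Module.compHom D K.subtype
  have smul_def : ∀ (c : ↥K) (x : D), c • x = (c : D) * x := fun _ _ => rfl
  set La : Module.End ↥K D :=
    { toFun := fun x => a * x
      map_add' := fun x y => mul_add a x y
      map_smul' := fun c x => by
        simp only [smul_def, RingHom.id_apply]
        rw [← mul_assoc, ← hcommK c c.2, mul_assoc] } with hLa
  set Ra : Module.End ↥K D :=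
    { toFun := fun x => x * a
      map_add' := fun x y => add_mul x y a
      map_smul' := fun c x => by simp only [smul_def, RingHom.id_apply, mul_assoc] } with hRa
  set δ : Module.End ↥K D := La - Ra with hδ
  have hδ_apply : ∀ x : D, δ x = a * x - x * a := fun x => rfl
  haveI : CharP (Module.End ↥K D) p := by
    constructor
    intro k
    rw [← CharP.cast_eq_zero_iff D p k]
    constructor
    · intro hE
      have := LinearMap.congr_fun hE (1 : D)
      rw [Module.End.natCast_apply] at this
      simpa [nsmul_eq_mul] using this
    · intro hD
      ext x
      rw [Module.End.natCast_apply]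
      simp [nsmul_eq_mul, hD]
  have hLapow : ∀ (k : ℕ) (x : D), (La ^ k) x = a ^ k * x := by
    intro k
    induction k with
    | zero => intro x; simp
    | succ k ih =>
      intro x
      rw [pow_succ, Module.End.mul_apply, ih (La x)]
      show a ^ k * (a * x) = a ^ (k+1) * x
      rw [← mul_assoc, ← pow_succ]
  have hRapow : ∀ (k : ℕ) (x : D), (Ra ^ k) x = x * a ^ k := by
    intro k
    induction k with
    | zero => intro x; simp
    | succ k ih =>
      intro x
      rw [pow_succ, Module.End.mul_apply, ih (Ra x)]
      show (x * a) * a ^ k = x * a ^ (k+1)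
      rw [mul_assoc, ← pow_succ']
  have hcomm_LaRa : Commute La Ra := by
    ext x
    show a * (x * a) = (a * x) * a
    rw [mul_assoc]
  have hδq : δ ^ Fintype.card ↥K = δ := by
    rw [hδ, hcard, sub_pow_char_pow_of_commute p (m:ℕ) hcomm_LaRa]
    ext x
    rw [LinearMap.sub_apply, LinearMap.sub_apply, hLapow, hRapow]
    show a ^ (p^(m:ℕ)) * x - x * a ^ (p^(m:ℕ)) = a * x - x * a
    rw [← hcard, haq]
  -- polynomial identity and eigen extraction
  by_cases H : ∀ c : ↥K, c ≠ 0 → ∀ x : D, δ x = c • x → x = 0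
  · -- then δ = 0, contradiction with hab
    have hinj : ∀ s : Finset ↥K, (0:↥K) ∉ s → ∀ x : D,
        (Polynomial.aeval δ (∏ c ∈ s, (Polynomial.X - Polynomial.C c))) x = 0 → x = 0 := by
      intro s
      induction s using Finset.induction with
      | empty => intro _ x hx; simpa using hx
      | insert _ _ hcns ih =>
        rename_i c s
        intro h0 x hx
        rw [Finset.prod_insert hcns, map_mul, Module.End.mul_apply] at hx
        set y := (Polynomial.aeval δ (∏ c ∈ s, (Polynomial.X - Polynomial.C c))) x with hy
        have hc0 : c ≠ 0 := fun hc => h0 (hc ▸ Finset.mem_insert_self c s)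
        have : δ y - c • y = 0 := by
          simpa [Polynomial.aeval_X, Polynomial.aeval_C, Algebra.algebraMap_eq_smul_one,
            LinearMap.sub_apply, LinearMap.smul_apply] using hx
        have hy0 : y = 0 := H c hc0 y (sub_eq_zero.1 this)
        exact ih (fun h0' => h0 (Finset.mem_insert_of_mem h0')) x hy0
    have hprod := prod_X_sub_C_finite_field ↥K
    have hzero : Polynomial.aeval δ (∏ c : ↥K, (Polynomial.X - Polynomial.C c)) = 0 := by
      rw [hprod, map_sub, map_pow, Polynomial.aeval_X, hδq, sub_self]
    have hsplit : (∏ c : ↥K, (Polynomial.X - Polynomial.C c))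
        = (∏ c ∈ Finset.univ.erase (0:↥K), (Polynomial.X - Polynomial.C c)) * Polynomial.X := by
      rw [← Finset.prod_erase_mul Finset.univ _ (Finset.mem_univ (0:↥K))]
      simp
    have hδ0 : ∀ x : D, δ x = 0 := by
      intro x
      refine hinj (Finset.univ.erase (0:↥K)) (Finset.notMem_erase _ _) (δ x) ?_
      have := LinearMap.congr_fun hzero x
      rw [hsplit, map_mul, Polynomial.aeval_X, Module.End.mul_apply] at this
      exact this
    have := hδ0 b
    rw [hδ_apply] at this
    exact hab (sub_eq_zero.1 this)
  · push_neg at H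
    obtain ⟨c, hc0, v, hδv, hv0⟩ := H
    have hcD : (c : D) ≠ 0 := fun hc => hc0 (Subtype.ext hc)
    have h1 : a * v - v * a = (c:D) * v := by rw [← hδ_apply, hδv]; rfl
    have hva : v * a = (a - (c:D)) * v := by
      rw [sub_mul, ← h1, sub_sub_cancel]
    set a' := a - (c:D) with ha'def
    have ha'K : a' ∈ K := K.sub_mem haK c.2
    have ha'ne : a' ≠ a := fun hh => hcD (sub_eq_self.1 hh)
    have hvinv : v⁻¹ * v = 1 := inv_mul_cancel₀ hv0
    have hvinv' : v * v⁻¹ = 1 := mul_inv_cancel₀ hv0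
    have conj_mul : ∀ x y : D, v * (x * y) * v⁻¹ = (v * x * v⁻¹) * (v * y * v⁻¹) := by
      intro x y
      calc v * (x * y) * v⁻¹ = v * x * (v⁻¹ * v) * y * v⁻¹ := by
            rw [hvinv, mul_one, mul_assoc v x y]
        _ = (v * x * v⁻¹) * (v * y * v⁻¹) := by
            simp only [mul_assoc]
    have hψK : ∀ k ∈ K, v * k * v⁻¹ ∈ K := by
      intro k hk
      rw [hKdef] at hk ⊢
      induction hk using Subring.closure_induction with
      | mem x hx =>
        have hxa : x = a := hx
        have hconj : v * a * v⁻¹ = a' := by rw [hva, mul_assoc, hvinv', mul_one]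
        rw [hxa, hconj]
        exact ha'K
      | zero => simp [Subring.zero_mem]
      | one => rw [mul_one, hvinv']; exact Subring.one_mem _
      | add x y _ _ hx hy => rw [mul_add, add_mul]; exact Subring.add_mem _ hx hy
      | neg x _ hx => rw [mul_neg, neg_mul]; exact Subring.neg_mem _ hx
      | mul x y _ _ hx hy => rw [conj_mul]; exact Subring.mul_mem _ hx hy
    have hswap : ∀ k ∈ K, ∃ k' ∈ K, v * k = k' * v := by
      intro k hk
      refine ⟨v * k * v⁻¹, hψK k hk, ?_⟩
      rw [mul_assoc, hvinv, mul_one]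
    have hswap_pow : ∀ i : ℕ, ∀ k ∈ K, ∃ k' ∈ K, v ^ i * k = k' * v ^ i := by
      intro i
      induction i with
      | zero => intro k hk; exact ⟨k, hk, by simp⟩
      | succ i ih =>
        intro k hk
        obtain ⟨k', hk', hvk⟩ := hswap k hk
        obtain ⟨k'', hk'', hvk'⟩ := ih k' hk'
        refine ⟨k'', hk'', ?_⟩
        rw [pow_succ, mul_assoc, hvk, ← mul_assoc, hvk', mul_assoc, ← pow_succ]
    obtain ⟨mv, hmv, hvm⟩ := tor v hv0
    set S₂ : Set D := Set.range (fun y : ↥K × Fin mv => (y.1 : D) * v ^ ((y.2 : ℕ))) with hS₂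
    have hS₂fin : S₂.Finite := Set.finite_range _
    have h1S₂ : (1:D) ∈ S₂ := ⟨(1, ⟨0, hmv⟩), by simp⟩
    have hmulS₂ : ∀ x ∈ S₂, ∀ y ∈ S₂, x * y ∈ S₂ := by
      rintro _ ⟨⟨k, i⟩, rfl⟩ _ ⟨⟨k', j⟩, rfl⟩
      obtain ⟨k'', hk''K, hcm⟩ := hswap_pow (i : ℕ) (k' : D) k'.2
      refine ⟨(⟨(k:D) * k'', Subring.mul_mem _ k.2 hk''K⟩, ⟨((i:ℕ) + (j:ℕ)) % mv, Nat.mod_lt _ hmv⟩), ?_⟩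
      show ((k:D) * k'') * v ^ (((i:ℕ) + (j:ℕ)) % mv) = ((k:D) * v ^ (i:ℕ)) * ((k':D) * v ^ (j:ℕ))
      rw [← powmod v mv hmv hvm, pow_add]
      calc (k:D) * k'' * (v ^ (i:ℕ) * v ^ (j:ℕ))
          = (k:D) * ((k'' * v ^ (i:ℕ)) * v ^ (j:ℕ)) := by simp only [mul_assoc]
        _ = (k:D) * ((v ^ (i:ℕ) * (k':D)) * v ^ (j:ℕ)) := by rw [hcm]
        _ = ((k:D) * v ^ (i:ℕ)) * ((k':D) * v ^ (j:ℕ)) := by simp only [mul_assoc]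
    obtain ⟨R₂, hSR₂, hR₂fin⟩ := exists_finite_subring D p S₂ hS₂fin h1S₂ hmulS₂
    haveI : Finite ↥R₂ := hR₂fin
    have hR₂field : IsField ↥R₂ := Finite.isDomain_to_isField ↥R₂
    have haR₂ : a ∈ R₂ := hSR₂ ⟨(⟨a, haK⟩, ⟨0, hmv⟩), by simp⟩
    have hvR₂ : v ∈ R₂ := by
      refine hSR₂ ⟨(1, ⟨1 % mv, Nat.mod_lt _ hmv⟩), ?_⟩
      show (((1:↥K)):D) * v ^ (1 % mv) = v
      rw [← powmod v mv hmv hvm 1, pow_one, OneMemClass.coe_one, one_mul]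
    have hcommav : a * v = v * a :=
      congrArg Subtype.val (hR₂field.mul_comm ⟨a, haR₂⟩ ⟨v, hvR₂⟩)
    have : a * v = a' * v := by rw [hcommav, hva]
    exact ha'ne (mul_right_cancel₀ hv0 this.symm)
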